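/- arXiv:math/0305154 — 2 statements merged into one kernel-verified Lean document; each statement's English description precedes it below -/
import Mathlib

section
/- Let L be a finite meet-semilattice and G ⊆ L \ {0̂}. Then G is a building set of L if and only if: (a) every element of L \ {0̂} is a join of elements of G, and (b) for any x ∈ L, any pairwise distinct elements y, y₁, …, y_t of max G_{≤x}, and any z ∈ L with z < y, the following two conditions hold: (i) disjointness: G_{≤y} ∩ G_{≤ y₁∨…∨y_t} = ∅, and (ii) necessity: z∨y₁∨…∨y_t < y∨y₁∨…∨y_t. -/
attribute [local instance] Classical.propDecidable

universe u

/-- The set of maximal elements of `G` below `x`. -/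
def maxBelow {L : Type u} [PartialOrder L] (G : Set L) (x : L) : Set L :=
  {g | g ∈ G ∧ g ≤ x ∧ ∀ h ∈ G, h ≤ x → g ≤ h → h = g}

/-- The tuple in the product of lower intervals which is `g` in the coordinate
indexed by `g` and bottom elsewhere. -/
noncomputable def deltaTuple {L : Type u} [PartialOrder L] [OrderBot L] (G : Set L) (x : L)
    (g : maxBelow G x) : (h : maxBelow G x) → Set.Iic (h : L) :=
  fun h => if (h : L) = (g : L) then ⟨(h : L), le_refl _⟩ else ⟨⊥, bot_le⟩

/-- `G` is a (combinatorial) building set: `G` avoids the bottom element, and for every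
`x ≠ ⊥` the interval `[⊥, x]` decomposes as the product of the intervals below the maximal
elements of `G` below `x`, via an isomorphism sending delta tuples to the corresponding
maximal elements. -/
def IsBuilding {L : Type u} [PartialOrder L] [OrderBot L] (G : Set L) : Prop :=
  (∀ g ∈ G, g ≠ ⊥) ∧
  ∀ x : L, x ≠ ⊥ →
    ∃ φ : ((h : maxBelow G x) → Set.Iic (h : L)) ≃o Set.Iic x,
      ∀ g : maxBelow G x, ((φ (deltaTuple G x g) : Set.Iic x) : L) = (g : L)

set_option linter.unusedSectionVars false

section Aux
variable {L : Type u} [SemilatticeInf L] [Fintype L] [OrderBot L]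

lemma exists_isLUB_of_bddAbove (S : Set L) (hb : BddAbove S) : ∃ c, IsLUB S c := by
  obtain ⟨b, hbub⟩ := hb
  set U : Finset L := (Set.toFinite (upperBounds S)).toFinset with hU
  have hne : U.Nonempty := ⟨b, by simp only [hU, Set.Finite.mem_toFinset]; exact hbub⟩
  refine ⟨U.inf' hne id, ?_, ?_⟩
  · intro s hs
    exact Finset.le_inf' hne id fun u hu => (by
      rw [hU, Set.Finite.mem_toFinset] at hu; exact hu hs)
  · intro u hu
    exact Finset.inf'_le id (by rw [hU, Set.Finite.mem_toFinset]; exact hu)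

noncomputable def bsup (S : Set L) : L := if h : ∃ c, IsLUB S c then h.choose else ⊥

lemma isLUB_bsup (S : Set L) (hb : BddAbove S) : IsLUB S (bsup S) := by
  have h := exists_isLUB_of_bddAbove S hb
  rw [bsup, dif_pos h]; exact h.choose_spec

lemma exists_maxBelow {G : Set L} {g x : L} (hg : g ∈ G) (hgx : g ≤ x) :
    ∃ m ∈ maxBelow G x, g ≤ m := by
  obtain ⟨m, hm, hmax⟩ := Set.Finite.exists_maximalFor id {h | h ∈ G ∧ g ≤ h ∧ h ≤ x}
    (Set.toFinite _) ⟨g, hg, le_rfl, hgx⟩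
  exact ⟨m, ⟨hm.1, hm.2.2, fun h hh hhx hmh => le_antisymm (hmax ⟨hh, hm.2.1.trans hmh, hhx⟩ hmh) hmh⟩,
    hm.2.1⟩

section Backward
variable {G : Set L} (hG0 : ∀ g ∈ G, g ≠ ⊥)
  (hJoin : ∀ x : L, x ≠ ⊥ → ∃ S : Set L, S ⊆ G ∧ IsLUB S x)
  (hDN : ∀ x : L, ∀ y ∈ maxBelow G x, ∀ T : Finset L, ↑T ⊆ maxBelow G x → y ∉ T →
          ∀ z : L, z < y →
            ((∀ j1 : L, IsLUB (↑T : Set L) j1 →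
                {g ∈ G | g ≤ y} ∩ {g ∈ G | g ≤ j1} = ∅) ∧
             (∀ jz jy : L, IsLUB (insert z (↑T : Set L)) jz →
                IsLUB (insert y (↑T : Set L)) jy → jz < jy)))

include hG0 hDN in
lemma uniq_maxBelow {x g m m' : L} (hg : g ∈ G) (hm : m ∈ maxBelow G x)
    (hm' : m' ∈ maxBelow G x) (h1 : g ≤ m) (h2 : g ≤ m') : m = m' := by
  by_contra hne
  have hbot : (⊥ : L) < m := bot_lt_iff_ne_bot.mpr (hG0 m hm.1)
  have hd := (hDN x m hm {m'} (by simp [hm']) (by simp [hne]) ⊥ hbot).1 m'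
    (by simpa using isLUB_singleton)
  have : g ∈ ({g ∈ G | g ≤ m} ∩ {g ∈ G | g ≤ m'} : Set L) := ⟨⟨hg, h1⟩, ⟨hg, h2⟩⟩
  rw [hd] at this
  exact this

include hJoin in
lemma isLUB_G_le {x : L} (hx : x ≠ ⊥) : IsLUB {g | g ∈ G ∧ g ≤ x} x := by
  obtain ⟨S, hSG, hS⟩ := hJoin x hx
  constructor
  · intro g hg; exact hg.2
  · intro u hu
    exact hS.2 fun s hs => hu ⟨hSG hs, hS.1 hs⟩

include hG0 hJoin hDN in
lemma crux : ∀ x : L, ∀ t : (h : maxBelow G x) → Set.Iic (h : L), ∀ g : L, g ∈ G →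
    ∀ h0 : maxBelow G x, g ≤ (h0 : L) → ∀ w : L,
    IsLUB (Set.range fun h : maxBelow G x => ((t h : L))) w → g ≤ w → g ≤ (t h0 : L) := by
  intro x
  induction x using WellFoundedLT.induction with
  | ind x IH =>
  intro t g hgG h0 hgh0 w hw hgw
  have htx : ∀ h : maxBelow G x, (t h : L) ≤ x := fun h => (t h).2.trans h.2.2.1
  have hwx : w ≤ x := hw.2 (by rintro a ⟨h, rfl⟩; exact htx h)
  rcases eq_or_lt_of_le hwx with hwx | hwx
  · -- w = x : use necessity to show t h0 = h0
    have hth0 : (t h0 : L) = (h0 : L) := by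
      by_contra hne
      have hlt : (t h0 : L) < (h0 : L) := lt_of_le_of_ne (t h0).2 hne
      set T : Finset L := (Set.toFinite (maxBelow G x \ {(h0 : L)})).toFinset with hT
      have hTmem : ∀ a : L, a ∈ T ↔ a ∈ maxBelow G x ∧ a ≠ (h0 : L) := by
        intro a; rw [hT, Set.Finite.mem_toFinset]; simp [Set.mem_diff]
      have hTsub : (↑T : Set L) ⊆ maxBelow G x := fun a ha => ((hTmem a).mp ha).1
      have hh0T : (h0 : L) ∉ T := fun hmem => ((hTmem _).mp hmem).2 rfl
      -- upper bound set facts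
      have hbddz : BddAbove (insert (t h0 : L) (↑T : Set L)) := by
        refine ⟨x, ?_⟩
        rintro a (rfl | ha)
        · exact htx h0
        · exact (hTsub ha).2.1
      have hbddy : BddAbove (insert (h0 : L) (↑T : Set L)) := by
        refine ⟨x, ?_⟩
        rintro a (rfl | ha)
        · exact h0.2.2.1
        · exact (hTsub ha).2.1
      have hjz := isLUB_bsup _ hbddz
      have hjy := isLUB_bsup _ hbddy
      have hlt2 := (hDN x (h0 : L) h0.2 T hTsub hh0T (t h0 : L) hlt).2 _ _ hjz hjy
      -- x ≤ jz
      have hxjz : x ≤ bsup (insert (t h0 : L) (↑T : Set L)) := by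
        refine hwx.symm.trans_le (hw.2 ?_)
        rintro a ⟨h, rfl⟩
        by_cases hcase : (h : L) = (h0 : L)
        · have : h = h0 := Subtype.ext hcase
          subst this
          exact hjz.1 (Set.mem_insert _ _)
        · exact (t h).2.trans (hjz.1 (Set.mem_insert_of_mem _ ((hTmem _).mpr ⟨h.2, hcase⟩)))
      have hjyx : bsup (insert (h0 : L) (↑T : Set L)) ≤ x := by
        refine hjy.2 ?_
        rintro a (rfl | ha)
        · exact h0.2.2.1
        · exact (hTsub ha).2.1
      exact absurd (lt_of_lt_of_le hlt2 (hjyx.trans hxjz)) (lt_irrefl _)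
    rw [hth0]; exact hgh0
  · -- w < x : induction step
    have hwbot : w ≠ ⊥ := fun h => hG0 g hgG (le_bot_iff.mp (h ▸ hgw))
    obtain ⟨m0, hm0, hgm0⟩ := exists_maxBelow hgG hgw
    -- m0 ≤ h0
    have hm0h0 : m0 ≤ (h0 : L) := by
      have hm0x : m0 ≤ x := hm0.2.1.trans hwx.le
      obtain ⟨m1, hm1, hm0m1⟩ := exists_maxBelow hm0.1 hm0x
      have : m1 = (h0 : L) :=
        uniq_maxBelow hG0 hDN hgG hm1 h0.2 (hgm0.trans hm0m1) hgh0
      exact this ▸ hm0m1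
    -- the set A
    set A : Set L := {g' | g' ∈ G ∧ ∃ h : maxBelow G x, g' ≤ (t h : L)} with hA
    have hAw : ∀ a ∈ A, a ≤ w := by
      rintro a ⟨haG, h, hath⟩
      exact hath.trans (hw.1 ⟨h, rfl⟩)
    -- tuple s over maxBelow G w
    have hsle : ∀ m : maxBelow G w, bsup (A ∩ Set.Iic (m : L)) ≤ (m : L) := fun m =>
      (isLUB_bsup _ ⟨(m : L), fun a ha => ha.2⟩).2 fun a ha => ha.2
    set s : (m : maxBelow G w) → Set.Iic (m : L) :=
      fun m => ⟨bsup (A ∩ Set.Iic (m : L)), hsle m⟩ with hs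
    have hbddm : ∀ m : maxBelow G w, BddAbove (A ∩ Set.Iic (m : L)) :=
      fun m => ⟨(m : L), fun a ha => ha.2⟩
    -- IsLUB (range s) w
    have hlubs : IsLUB (Set.range fun m : maxBelow G w => ((s m : L))) w := by
      constructor
      · rintro a ⟨m, rfl⟩
        exact (isLUB_bsup _ (hbddm m)).2 fun a' ha' => hAw a' ha'.1
      · intro u hu
        have huA : u ∈ upperBounds A := by
          intro a ha
          obtain ⟨m, hm, ham⟩ := exists_maxBelow ha.1 (hAw a ha)
          exact le_trans ((isLUB_bsup _ (hbddm ⟨m, hm⟩)).1 ⟨ha, ham⟩) (hu ⟨⟨m, hm⟩, rfl⟩)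
        refine hw.2 ?_
        rintro a ⟨h, rfl⟩
        show (t h : L) ≤ u
        by_cases hbot : (t h : L) = ⊥
        · rw [hbot]; exact bot_le
        · exact (isLUB_G_le hJoin hbot).2 fun g' hg' => huA ⟨hg'.1, h, hg'.2⟩
    -- apply IH at w
    have hgs : g ≤ (s ⟨m0, hm0⟩ : L) :=
      IH w hwx s g hgG ⟨m0, hm0⟩ hgm0 w hlubs hgw
    -- bsup (A ∩ Iic m0) ≤ t h0
    refine le_trans hgs ((isLUB_bsup _ (hbddm ⟨m0, hm0⟩)).2 ?_)
    rintro a ⟨⟨haG, h, hath⟩, ham0⟩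
    have hax : a ≤ x := hath.trans (htx h)
    have : (h : L) = (h0 : L) :=
      uniq_maxBelow hG0 hDN haG h.2 h0.2 (hath.trans (t h).2) (ham0.trans hm0h0)
    have hh : h = h0 := Subtype.ext this
    exact hh ▸ hath

include hG0 hJoin hDN in
lemma isBuilding_of_conditions : IsBuilding G := by
  refine ⟨hG0, fun x hx => ?_⟩
  -- upper bound facts
  have htx : ∀ (t : (h : maxBelow G x) → Set.Iic (h : L)) (h : maxBelow G x),
      (t h : L) ≤ x := fun t h => (t h).2.trans h.2.2.1
  have hubx : ∀ t : (h : maxBelow G x) → Set.Iic (h : L),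
      x ∈ upperBounds (Set.range fun h => ((t h : L))) := by
    rintro t a ⟨h, rfl⟩; exact htx t h
  have hbddr : ∀ t : (h : maxBelow G x) → Set.Iic (h : L),
      BddAbove (Set.range fun h => ((t h : L))) := fun t => ⟨x, hubx t⟩
  set φf : ((h : maxBelow G x) → Set.Iic (h : L)) → Set.Iic x :=
    fun t => ⟨bsup (Set.range fun h => ((t h : L))),
      Set.mem_Iic.mpr ((isLUB_bsup _ (hbddr t)).2 (hubx t))⟩ with hφf
  have hbddψ : ∀ (w : Set.Iic x) (h : maxBelow G x),
      BddAbove {g | g ∈ G ∧ g ≤ (w : L) ∧ g ≤ (h : L)} :=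
    fun w h => ⟨(h : L), fun a ha => ha.2.2⟩
  set ψf : Set.Iic x → ((h : maxBelow G x) → Set.Iic (h : L)) :=
    fun w h => ⟨bsup {g | g ∈ G ∧ g ≤ (w : L) ∧ g ≤ (h : L)},
      Set.mem_Iic.mpr ((isLUB_bsup _ (hbddψ w h)).2 fun a ha => ha.2.2)⟩ with hψf
  -- monotone
  have hφmono : ∀ t t', t ≤ t' → φf t ≤ φf t' := by
    intro t t' htt
    show bsup _ ≤ bsup _
    refine (isLUB_bsup _ (hbddr t)).2 ?_
    rintro a ⟨h, rfl⟩
    exact le_trans (htt h) ((isLUB_bsup _ (hbddr t')).1 ⟨h, rfl⟩)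
  have hψmono : ∀ w w', w ≤ w' → ψf w ≤ ψf w' := by
    intro w w' hww h
    show bsup _ ≤ bsup _
    refine (isLUB_bsup _ (hbddψ w h)).2 ?_
    intro a ha
    exact (isLUB_bsup _ (hbddψ w' h)).1 ⟨ha.1, ha.2.1.trans hww, ha.2.2⟩
  -- left inverse : ψf (φf t) = t
  have hleft : ∀ t, ψf (φf t) = t := by
    intro t
    funext h0
    apply Subtype.ext
    show bsup _ = (t h0 : L)
    apply le_antisymm
    · refine (isLUB_bsup _ (hbddψ (φf t) h0)).2 ?_
      rintro a ⟨haG, haw, hah0⟩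
      exact crux hG0 hJoin hDN x t a haG h0 hah0 _ (isLUB_bsup _ (hbddr t)) haw
    · by_cases hbot : (t h0 : L) = ⊥
      · rw [hbot]; exact bot_le
      · refine (isLUB_G_le hJoin hbot).2 ?_
        intro a ha
        refine (isLUB_bsup _ (hbddψ (φf t) h0)).1 ⟨ha.1, ?_, ha.2.trans (t h0).2⟩
        exact ha.2.trans ((isLUB_bsup _ (hbddr t)).1 ⟨h0, rfl⟩)
  -- right inverse : φf (ψf w) = w
  have hright : ∀ w, φf (ψf w) = w := by
    intro w
    apply Subtype.ext
    show bsup _ = (w : L)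
    apply le_antisymm
    · refine (isLUB_bsup _ (hbddr (ψf w))).2 ?_
      rintro a ⟨h, rfl⟩
      show bsup _ ≤ (w : L)
      exact (isLUB_bsup _ (hbddψ w h)).2 fun a' ha' => ha'.2.1
    · by_cases hbot : (w : L) = ⊥
      · rw [hbot]; exact bot_le
      · refine (isLUB_G_le hJoin hbot).2 ?_
        intro a ha
        obtain ⟨m, hm, ham⟩ := exists_maxBelow ha.1 (ha.2.trans w.2)
        refine le_trans ((isLUB_bsup _ (hbddψ w ⟨m, hm⟩)).1 ⟨ha.1, ha.2, ham⟩) ?_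
        exact (isLUB_bsup _ (hbddr (ψf w))).1 ⟨⟨m, hm⟩, rfl⟩
  refine ⟨⟨⟨φf, ψf, hleft, hright⟩, ?_⟩, ?_⟩
  · -- map_rel_iff
    intro t t'
    show φf t ≤ φf t' ↔ t ≤ t'
    constructor
    · intro hle
      have := hψmono _ _ hle
      rwa [hleft, hleft] at this
    · exact hφmono t t'
  · -- delta property
    intro g
    show (φf (deltaTuple G x g) : L) = (g : L)
    show bsup _ = (g : L)
    have hdval : ∀ h : maxBelow G x, ((deltaTuple G x g h : L)) =
        if (h : L) = (g : L) then (h : L) else ⊥ := by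
      intro h
      rw [deltaTuple]
      by_cases hc : (h : L) = (g : L)
      · rw [if_pos hc, if_pos hc]
      · rw [if_neg hc, if_neg hc]
    apply le_antisymm
    · refine (isLUB_bsup _ (hbddr _)).2 ?_
      rintro a ⟨h, rfl⟩
      show ((deltaTuple G x g h : L)) ≤ (g : L)
      rw [hdval h]
      by_cases hc : (h : L) = (g : L)
      · rw [if_pos hc]; exact le_of_eq hc
      · rw [if_neg hc]; exact bot_le
    · have : ((deltaTuple G x g g : L)) = (g : L) := by
        rw [hdval g, if_pos rfl]
      exact this ▸ (isLUB_bsup _ (hbddr _)).1 ⟨g, rfl⟩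

end Backward

section Forward
variable {G : Set L}

lemma building_join (hB : IsBuilding G) :
    ∀ x : L, x ≠ ⊥ → ∃ S : Set L, S ⊆ G ∧ IsLUB S x := by
  obtain ⟨hb, hiso⟩ := hB
  intro x hx
  obtain ⟨φ, hφ⟩ := hiso x hx
  refine ⟨maxBelow G x, fun m hm => hm.1, fun m hm => hm.2.1, ?_⟩
  intro u hu
  set v : Set.Iic x := ⟨x ⊓ u, Set.mem_Iic.mpr inf_le_left⟩ with hv
  set t := φ.symm v with ht
  have htop : ∀ h : maxBelow G x, (t h : L) = (h : L) := by
    intro h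
    have h1 : φ (deltaTuple G x h) ≤ v := by
      rw [← Subtype.coe_le_coe, hφ h]
      exact le_inf h.2.2.1 (hu h.2)
    have h2 : deltaTuple G x h ≤ t := by
      have := φ.symm.monotone h1
      rwa [φ.symm_apply_apply] at this
    have h3 := h2 h
    have h4 : ((deltaTuple G x h h : L)) = (h : L) := by rw [deltaTuple, if_pos rfl]
    refine le_antisymm (Set.mem_Iic.mp (t h).2) ?_
    exact (le_of_eq h4.symm).trans (Subtype.coe_le_coe.mpr h3)
  set tt : (h : maxBelow G x) → Set.Iic (h : L) :=
    fun h => ⟨(h : L), Set.mem_Iic.mpr le_rfl⟩ with htt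
  have hteq : t = tt := funext fun h => Subtype.ext (htop h)
  have h5 : φ.symm ⟨x, Set.mem_Iic.mpr le_rfl⟩ ≤ tt := by
    intro h
    exact Subtype.coe_le_coe.mp (Set.mem_Iic.mp (φ.symm ⟨x, Set.mem_Iic.mpr le_rfl⟩ h).2)
  have h6 : (⟨x, Set.mem_Iic.mpr le_rfl⟩ : Set.Iic x) ≤ v := by
    have := φ.monotone h5
    rw [φ.apply_symm_apply, ← hteq, ht, φ.apply_symm_apply] at this
    exact this
  have : x ≤ x ⊓ u := Subtype.coe_le_coe.mpr h6
  exact le_trans this inf_le_right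

lemma building_dn (hB : IsBuilding G) :
    ∀ x : L, ∀ y ∈ maxBelow G x, ∀ T : Finset L, ↑T ⊆ maxBelow G x → y ∉ T →
      ∀ z : L, z < y →
        ((∀ j1 : L, IsLUB (↑T : Set L) j1 →
            {g ∈ G | g ≤ y} ∩ {g ∈ G | g ≤ j1} = ∅) ∧
         (∀ jz jy : L, IsLUB (insert z (↑T : Set L)) jz →
            IsLUB (insert y (↑T : Set L)) jy → jz < jy)) := by
  obtain ⟨hb, hiso⟩ := hB
  intro x y hy T hT hyT z hz
  have hx : x ≠ ⊥ := by
    intro h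
    exact hb y hy.1 (le_bot_iff.mp (h ▸ hy.2.1))
  obtain ⟨φ, hφ⟩ := hiso x hx
  set Y : maxBelow G x := ⟨y, hy⟩ with hY
  have hTx : ∀ a ∈ T, a ≤ x := fun a ha => (hT ha).2.1
  -- helper : bottom tuple maps to bottom
  have hbotT : ∀ t : (h : maxBelow G x) → Set.Iic (h : L),
      (∀ h, (t h : L) = ⊥) → ((φ t : L)) = ⊥ := by
    intro t htb
    have h1 : t ≤ φ.symm ⟨⊥, Set.mem_Iic.mpr bot_le⟩ := by
      intro h
      rw [← Subtype.coe_le_coe, htb h]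
      exact bot_le
    have := φ.monotone h1
    rw [φ.apply_symm_apply] at this
    exact le_bot_iff.mp (Subtype.coe_le_coe.mpr this)
  constructor
  · -- disjointness
    intro j1 hj1
    rw [Set.eq_empty_iff_forall_notMem]
    rintro g ⟨⟨hgG, hgy⟩, ⟨-, hgj1⟩⟩
    have hj1x : j1 ≤ x := hj1.2 fun a ha => hTx a ha
    have hgx : g ≤ x := hgy.trans hy.2.1
    set tg := φ.symm ⟨g, Set.mem_Iic.mpr hgx⟩ with htg
    have h1 : tg ≤ deltaTuple G x Y := by
      have hle : (⟨g, Set.mem_Iic.mpr hgx⟩ : Set.Iic x) ≤ φ (deltaTuple G x Y) := by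
        rw [← Subtype.coe_le_coe, hφ Y]
        exact hgy
      have := φ.symm.monotone hle
      rwa [φ.symm_apply_apply] at this
    set s : (h : maxBelow G x) → Set.Iic (h : L) :=
      fun h => if (h : L) ∈ T then ⟨(h : L), Set.mem_Iic.mpr le_rfl⟩
        else ⟨⊥, Set.mem_Iic.mpr bot_le⟩ with hs
    have hds : ∀ a : maxBelow G x, (a : L) ∈ T → deltaTuple G x a ≤ s := by
      intro a ha h
      simp only [hs, deltaTuple]
      by_cases hc : (h : L) = (a : L)
      · rw [if_pos hc, if_pos (by rw [hc]; exact ha)]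
      · rw [if_neg hc, ← Subtype.coe_le_coe]
        exact bot_le
    have hj1s : j1 ≤ ((φ s : L)) := by
      refine hj1.2 ?_
      intro a ha
      have h2 := φ.monotone (hds ⟨a, hT ha⟩ ha)
      rw [← Subtype.coe_le_coe, hφ] at h2
      exact h2
    have h2 : tg ≤ s := by
      have hle : (⟨g, Set.mem_Iic.mpr hgx⟩ : Set.Iic x) ≤ φ s := by
        rw [← Subtype.coe_le_coe]
        exact hgj1.trans hj1s
      have := φ.symm.monotone hle
      rw [φ.symm_apply_apply] at this
      exact this
    have hbot : ∀ h, (tg h : L) = ⊥ := by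
      intro h
      by_cases hc : (h : L) = y
      · have h3 := h2 h
        have hYs : (s h : L) = ⊥ := by
          simp only [hs]
          rw [if_neg (by rw [hc]; exact hyT)]
        exact le_bot_iff.mp ((Subtype.coe_le_coe.mpr h3).trans (le_of_eq hYs))
      · have h3 := h1 h
        have hd : ((deltaTuple G x Y h : L)) = ⊥ := by
          simp only [deltaTuple]
          rw [if_neg (by exact hc)]
        exact le_bot_iff.mp ((Subtype.coe_le_coe.mpr h3).trans (le_of_eq hd))
    have hgbot : g = ⊥ := by
      have h4 := hbotT tg hbot
      rw [htg, φ.apply_symm_apply] at h4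
      exact h4
    exact hb g hgG hgbot
  · -- necessity
    intro jz jy hjz hjy
    have hjyx : jy ≤ x := by
      refine hjy.2 ?_
      rintro a (rfl | ha)
      · exact hy.2.1
      · exact hTx a ha
    have hjzjy : jz ≤ jy := by
      refine hjz.2 ?_
      rintro a (rfl | ha)
      · exact hz.le.trans (hjy.1 (Set.mem_insert _ _))
      · exact hjy.1 (Set.mem_insert_of_mem _ ha)
    refine lt_of_le_of_ne hjzjy ?_
    intro e
    set sy : (h : maxBelow G x) → Set.Iic (h : L) :=
      fun h => if ((h : L) = y ∨ (h : L) ∈ T) then ⟨(h : L), Set.mem_Iic.mpr le_rfl⟩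
        else ⟨⊥, Set.mem_Iic.mpr bot_le⟩ with hsy
    have hdsy : ∀ a : maxBelow G x, ((a : L) = y ∨ (a : L) ∈ T) → deltaTuple G x a ≤ sy := by
      intro a ha h
      simp only [hsy, deltaTuple]
      by_cases hc : (h : L) = (a : L)
      · rw [if_pos hc, if_pos (by rw [hc]; exact ha)]
      · rw [if_neg hc, ← Subtype.coe_le_coe]
        exact bot_le
    have hcley : ∀ h : maxBelow G x, ((h : L) = y ∨ (h : L) ∈ T) → (h : L) ≤ jy := by
      rintro h (hc | hc)
      · rw [hc]; exact hjy.1 (Set.mem_insert _ _)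
      · exact hjy.1 (Set.mem_insert_of_mem _ hc)
    have hjysy : jy ≤ ((φ sy : L)) := by
      refine hjy.2 ?_
      rintro a (rfl | ha)
      · have h2 := φ.monotone (hdsy Y (Or.inl rfl))
        rw [← Subtype.coe_le_coe, hφ] at h2
        exact h2
      · have h2 := φ.monotone (hdsy ⟨a, hT ha⟩ (Or.inr ha))
        rw [← Subtype.coe_le_coe, hφ] at h2
        exact h2
    have hsyjy : ((φ sy : L)) ≤ jy := by
      have h2 : sy ≤ φ.symm ⟨jy, Set.mem_Iic.mpr hjyx⟩ := by
        intro h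
        by_cases hc : (h : L) = y ∨ (h : L) ∈ T
        · have hd : deltaTuple G x h ≤ φ.symm ⟨jy, Set.mem_Iic.mpr hjyx⟩ := by
            have hle : φ (deltaTuple G x h) ≤ ⟨jy, Set.mem_Iic.mpr hjyx⟩ := by
              rw [← Subtype.coe_le_coe, hφ]
              exact hcley h hc
            have := φ.symm.monotone hle
            rwa [φ.symm_apply_apply] at this
          have hd2 := hd h
          have hdd : ((deltaTuple G x h h : L)) = (h : L) := by
            simp [deltaTuple]
          have hsyh : (sy h : L) = (h : L) := by
            simp only [hsy]
            rw [if_pos hc]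
          have hd3 : ((deltaTuple G x h h : L)) ≤ ((φ.symm ⟨jy, Set.mem_Iic.mpr hjyx⟩ h : L)) :=
            Subtype.coe_le_coe.mpr hd2
          rw [hdd] at hd3
          rw [← Subtype.coe_le_coe, hsyh]
          exact hd3
        · have hsyh : (sy h : L) = ⊥ := by
            simp only [hsy]
            rw [if_neg hc]
          rw [← Subtype.coe_le_coe, hsyh]
          exact bot_le
      have h3 := φ.monotone h2
      rw [φ.apply_symm_apply] at h3
      exact Subtype.coe_le_coe.mpr h3
    have hjzx : jz ≤ x := hjzjy.trans hjyx
    set tz := φ.symm ⟨jz, Set.mem_Iic.mpr hjzx⟩ with htz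
    have htzsy : tz = sy := by
      have heq : (⟨jz, Set.mem_Iic.mpr hjzx⟩ : Set.Iic x) = φ sy := by
        apply Subtype.ext
        show jz = ((φ sy : Set.Iic x) : L)
        rw [e]
        exact (le_antisymm hsyjy hjysy).symm
      rw [htz, heq, φ.symm_apply_apply]
    have hzx : z ≤ x := hz.le.trans hy.2.1
    set uz := φ.symm ⟨z, Set.mem_Iic.mpr hzx⟩ with huz
    have huzdelta : uz ≤ deltaTuple G x Y := by
      have hle : (⟨z, Set.mem_Iic.mpr hzx⟩ : Set.Iic x) ≤ φ (deltaTuple G x Y) := by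
        rw [← Subtype.coe_le_coe, hφ Y]
        exact hz.le
      have := φ.symm.monotone hle
      rwa [φ.symm_apply_apply] at this
    set sz : (h : maxBelow G x) → Set.Iic (h : L) :=
      fun h => if (h : L) ∈ T then ⟨(h : L), Set.mem_Iic.mpr le_rfl⟩ else uz h with hsz
    have huzsz : uz ≤ sz := by
      intro h
      simp only [hsz]
      by_cases hcT : (h : L) ∈ T
      · rw [if_pos hcT, ← Subtype.coe_le_coe]
        exact Set.mem_Iic.mp (uz h).2
      · rw [if_neg hcT]
    have hdsz : ∀ a : maxBelow G x, (a : L) ∈ T → deltaTuple G x a ≤ sz := by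
      intro a ha h
      simp only [hsz, deltaTuple]
      by_cases hc : (h : L) = (a : L)
      · rw [if_pos hc, if_pos (by rw [hc]; exact ha)]
      · rw [if_neg hc]
        by_cases hcT : (h : L) ∈ T
        · rw [if_pos hcT, ← Subtype.coe_le_coe]
          exact bot_le
        · rw [if_neg hcT, ← Subtype.coe_le_coe]
          exact bot_le
    have hjzsz : jz ≤ ((φ sz : L)) := by
      refine hjz.2 ?_
      rintro a (rfl | ha)
      · have h2 := φ.monotone huzsz
        rw [huz, φ.apply_symm_apply] at h2
        exact Subtype.coe_le_coe.mpr h2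
      · have h2 := φ.monotone (hdsz ⟨a, hT ha⟩ ha)
        rw [← Subtype.coe_le_coe, hφ] at h2
        exact h2
    have htzsz : tz ≤ sz := by
      have hle : (⟨jz, Set.mem_Iic.mpr hjzx⟩ : Set.Iic x) ≤ φ sz := by
        rw [← Subtype.coe_le_coe]
        exact hjzsz
      have := φ.symm.monotone hle
      rw [φ.symm_apply_apply] at this
      exact this
    have h3 := htzsz Y
    rw [htzsy] at h3
    have hYsy : (sy Y : L) = y := by
      simp [hsy, hY]
    have hszY : sz Y = uz Y := by
      simp only [hsz]
      rw [if_neg (by exact hyT)]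
    rw [hszY] at h3
    have h4 : y ≤ (uz Y : L) := by
      rw [← hYsy]
      exact Subtype.coe_le_coe.mpr h3
    have h5 : uz = deltaTuple G x Y := by
      funext h
      apply Subtype.ext
      by_cases hc : (h : L) = y
      · have hh : h = Y := Subtype.ext hc
        subst hh
        have hdd : ((deltaTuple G x Y Y : L)) = (Y : L) := by
          simp [deltaTuple]
        rw [hdd]
        exact le_antisymm (Set.mem_Iic.mp (uz Y).2) h4
      · have hdd : ((deltaTuple G x Y h : L)) = ⊥ := by
          simp only [deltaTuple]
          rw [if_neg (by exact hc)]
        rw [hdd]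
        exact le_bot_iff.mp ((Subtype.coe_le_coe.mpr (huzdelta h)).trans (le_of_eq hdd))
    have h6 : z = y := by
      have h7 := congrArg φ h5
      rw [huz, φ.apply_symm_apply] at h7
      have h8 := congrArg (Subtype.val) h7
      rw [hφ Y] at h8
      exact h8
    exact absurd h6 (ne_of_lt hz)

end Forward

end Aux

/-- characterization of building sets, Proposition 2.3 (4):
join-generation together with disjointness and necessity. -/
theorem isBuilding_iff_disjointness_and_necessity {L : Type u} [SemilatticeInf L]
    [Fintype L] [OrderBot L] (G : Set L) (hG0 : ∀ g ∈ G, g ≠ ⊥) :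
    IsBuilding G ↔
      ((∀ x : L, x ≠ ⊥ → ∃ S : Set L, S ⊆ G ∧ IsLUB S x) ∧
       (∀ x : L, ∀ y ∈ maxBelow G x, ∀ T : Finset L, ↑T ⊆ maxBelow G x → y ∉ T →
          ∀ z : L, z < y →
            ((∀ j1 : L, IsLUB (↑T : Set L) j1 →
                {g ∈ G | g ≤ y} ∩ {g ∈ G | g ≤ j1} = ∅) ∧
             (∀ jz jy : L, IsLUB (insert z (↑T : Set L)) jz →
                IsLUB (insert y (↑T : Set L)) jy → jz < jy)))) := by
  constructor
  · intro hB
    exact ⟨building_join hB, building_dn hB⟩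
  · rintro ⟨hJoin, hDN⟩
    exact isBuilding_of_conditions hG0 hJoin hDN
end

section
/- Let L be a finite meet-semilattice, G a building set of L, and N ⊆ G. Then N is nested if and only if there exists a chain (totally ordered subset) C ⊆ L such that N = ⋃_{x ∈ C} F(x). -/
attribute [local instance] Classical.propDecidable

universe u

/-- A subset `N` of a building set `G` is nested if for every finite set of at least two
pairwise incomparable elements of `N`, the join exists and does not belong to `G`. -/
def IsNested {L : Type u} [PartialOrder L] (G N : Set L) : Prop :=
  N ⊆ G ∧ ∀ T : Finset L, ↑T ⊆ N → 2 ≤ T.card →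
    (∀ a ∈ T, ∀ b ∈ T, a ≠ b → ¬ a ≤ b) →
    ∃ j : L, IsLUB (↑T : Set L) j ∧ j ∉ G

section Aux

variable {L : Type u} [SemilatticeInf L] [Fintype L] [OrderBot L] {G : Set L} {x : L}
variable (φ : ((h : maxBelow G x) → Set.Iic (h : L)) ≃o Set.Iic x)
variable (hφ : ∀ g : maxBelow G x, ((φ (deltaTuple G x g) : Set.Iic x) : L) = (g : L))

set_option linter.unusedSectionVars false
include hφ

/-- bottom tuple -/
noncomputable def botTuple (G : Set L) (x : L) : (h : maxBelow G x) → Set.Iic (h : L) :=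
  fun _ => ⟨⊥, bot_le⟩

lemma phi_bot : ((φ (botTuple G x) : Set.Iic x) : L) = ⊥ := by
  have h1 : botTuple G x ≤ φ.symm ⟨⊥, bot_le⟩ := fun k => bot_le
  have := φ.monotone h1
  rw [φ.apply_symm_apply] at this
  exact le_antisymm this bot_le

lemma phi_delta (g : maxBelow G x) : φ (deltaTuple G x g) = ⟨(g : L), g.2.2.1⟩ :=
  Subtype.ext (hφ g)

lemma symm_delta (g : maxBelow G x) : φ.symm ⟨(g : L), g.2.2.1⟩ = deltaTuple G x g := by
  rw [← phi_delta φ hφ g, φ.symm_apply_apply]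

/-- support lemma -/
lemma symm_coord_bot (g : maxBelow G x) (s : L) (hsx : s ≤ x) (hs : s ≤ (g : L))
    (k : maxBelow G x) (hk : k ≠ g) : (φ.symm ⟨s, hsx⟩) k = ⟨⊥, bot_le⟩ := by
  have h1 : φ.symm ⟨s, hsx⟩ ≤ φ.symm ⟨(g : L), g.2.2.1⟩ := φ.symm.monotone hs
  rw [symm_delta φ hφ] at h1
  have h2 := h1 k
  rw [deltaTuple] at h2
  rw [if_neg (fun h => hk (Subtype.ext h))] at h2
  exact le_antisymm h2 bot_le

lemma factors_disjoint (g h : maxBelow G x) (hgh : g ≠ h) : (g : L) ⊓ (h : L) = ⊥ := by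
  have hle : (g : L) ⊓ (h : L) ≤ x := le_trans inf_le_left g.2.2.1
  have h1 : ∀ k, (φ.symm ⟨(g:L) ⊓ h, hle⟩) k = ⟨⊥, bot_le⟩ := by
    intro k
    by_cases hkg : k = g
    · subst hkg
      exact symm_coord_bot φ hφ h _ hle inf_le_right k (fun e => hgh e)
    · exact symm_coord_bot φ hφ g _ hle inf_le_left k hkg
  have : φ.symm ⟨(g:L) ⊓ h, hle⟩ = botTuple G x := funext h1
  have h2 := congrArg φ this
  rw [φ.apply_symm_apply] at h2
  have h3 := congrArg (fun z : Set.Iic x => (z : L)) h2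
  simpa [phi_bot φ hφ] using h3

end Aux

section Aux2

variable {L : Type u} [SemilatticeInf L] [Fintype L] [OrderBot L] {G : Set L} {x : L}
variable (φ : ((h : maxBelow G x) → Set.Iic (h : L)) ≃o Set.Iic x)
variable (hφ : ∀ g : maxBelow G x, ((φ (deltaTuple G x g) : Set.Iic x) : L) = (g : L))

set_option linter.unusedSectionVars false

/-- every element of `G` below `x` lies below a maximal one -/
lemma exists_factor {s : L} (hs : s ∈ G) (hsx : s ≤ x) : ∃ h : maxBelow G x, s ≤ (h : L) := by
  classical
  set F : Finset L := Finset.univ.filter (fun h => h ∈ G ∧ s ≤ h ∧ h ≤ x) with hF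
  have hsF : s ∈ F := by simp [hF, hs, hsx]
  obtain ⟨m, hmF, hmax⟩ := F.exists_maximal ⟨s, hsF⟩
  simp only [hF, Finset.mem_filter, Finset.mem_univ, true_and] at hmF
  refine ⟨⟨m, hmF.1, hmF.2.2, ?_⟩, hmF.2.1⟩
  intro h hh hhx hmh
  by_contra hne
  exact hne (le_antisymm (hmax (by simp [hF, hh, le_trans hmF.2.1 hmh, hhx]) hmh) hmh)

include hφ

lemma factor_unique (hGb : IsBuilding G) {s : L} (hs : s ∈ G)
    {g h : maxBelow G x} (hsg : s ≤ (g : L)) (hsh : s ≤ (h : L)) : g = h := by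
  by_contra hne
  have := factors_disjoint φ hφ g h hne
  have hsb : s ≤ (⊥ : L) := this ▸ le_inf hsg hsh
  exact hGb.1 s hs (le_antisymm hsb bot_le)

/-- the top tuple maps to x -/
lemma phi_top : φ (fun k => ⟨(k : L), le_refl _⟩) = ⟨x, le_refl x⟩ := by
  have h1 : φ.symm ⟨x, le_refl x⟩ ≤ (fun k => ⟨(k : L), le_refl _⟩) := fun k => (φ.symm _ k).2
  have h2 := φ.monotone h1
  rw [φ.apply_symm_apply] at h2
  exact le_antisymm (φ _).2 h2

/-- if the coordinate of `s` at `g` is all of `g`, and `s ≤ g`, then `s = g` -/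
lemma coord_eq_top {s : L} (hsx : s ≤ x) (g : maxBelow G x) (hsg : s ≤ (g : L))
    (hc : ((φ.symm ⟨s, hsx⟩) g : L) = (g : L)) : s = (g : L) := by
  have : φ.symm ⟨s, hsx⟩ = deltaTuple G x g := by
    funext k
    by_cases hk : k = g
    · subst hk
      rw [deltaTuple]; rw [if_pos rfl]
      exact Subtype.ext hc
    · rw [symm_coord_bot φ hφ g s hsx hsg k hk, deltaTuple,
        if_neg (fun e => hk (Subtype.ext e))]
  have h2 := congrArg φ this
  rw [φ.apply_symm_apply, phi_delta φ hφ] at h2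
  exact congrArg Subtype.val h2

/-- if all coordinates of `s` are bottom then `s = ⊥` -/
lemma eq_bot_of_coords_bot {s : L} (hsx : s ≤ x)
    (hc : ∀ k, (φ.symm ⟨s, hsx⟩) k = ⟨⊥, bot_le⟩) : s = ⊥ := by
  have : φ.symm ⟨s, hsx⟩ = botTuple G x := funext hc
  have h2 := congrArg φ this
  rw [φ.apply_symm_apply] at h2
  have h3 := congrArg (fun z : Set.Iic x => (z : L)) h2
  simpa [phi_bot φ hφ] using h3

end Aux2

section Chains

variable {L : Type u} [SemilatticeInf L] [Fintype L] [OrderBot L]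

lemma chain_has_greatest {C : Set L} (hC : IsChain (· ≤ ·) C) (hne : C.Nonempty) :
    ∃ m ∈ C, ∀ y ∈ C, y ≤ m := by
  classical
  obtain ⟨m, hmF, hmax⟩ := C.toFinset.exists_maximal (by simpa using hne)
  rw [Set.mem_toFinset] at hmF
  refine ⟨m, hmF, fun y hy => ?_⟩
  by_cases hym : y = m
  · exact hym.le
  · rcases hC hy hmF hym with h | h
    · exact h
    · exact hmax (Set.mem_toFinset.2 hy) h

lemma exists_maximal_above {N : Set L} {n : L} (hn : n ∈ N) :
    ∃ m ∈ N, n ≤ m ∧ ∀ y ∈ N, m ≤ y → y = m := by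
  classical
  set F : Finset L := Finset.univ.filter (fun h => h ∈ N ∧ n ≤ h) with hF
  obtain ⟨m, hmF, hmax⟩ := F.exists_maximal ⟨n, by simp [hF, hn]⟩
  simp only [hF, Finset.mem_filter, Finset.mem_univ, true_and] at hmF
  refine ⟨m, hmF.1, hmF.2, fun y hy hmy => ?_⟩
  by_contra hne
  exact hne (le_antisymm (hmax (by simp [hF, hy, le_trans hmF.2 hmy]) hmy) hmy)

lemma maxBelow_bot {G : Set L} (hGb : IsBuilding G) : maxBelow G ⊥ = ∅ := by
  ext g
  simp only [maxBelow, Set.mem_setOf_eq, Set.mem_empty_iff_false, iff_false]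
  rintro ⟨hg, hgb, -⟩
  exact hGb.1 g hg (le_antisymm hgb bot_le)

end Chains

section Forward

variable {L : Type u} [SemilatticeInf L] [Fintype L] [OrderBot L] {G : Set L}

set_option linter.unusedSectionVars false

/-- Key lemma: the set of factors of the join of a nested antichain is the antichain itself. -/
lemma maxBelow_of_lub (hGb : IsBuilding G) {N S : Set L} (hNn : IsNested G N)
    (hSN : S ⊆ N) (hanti : ∀ a ∈ S, ∀ b ∈ S, a ≤ b → a = b) (hSne : S.Nonempty)
    {j : L} (hj : IsLUB S j) : maxBelow G j = S := by
  classical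
  obtain ⟨s₀, hs₀⟩ := hSne
  have hs₀G : s₀ ∈ G := hNn.1 (hSN hs₀)
  have hs₀j : s₀ ≤ j := hj.1 hs₀
  have hj0 : j ≠ ⊥ := fun e => hGb.1 s₀ hs₀G (le_antisymm (e ▸ hs₀j) bot_le)
  obtain ⟨φ, hφ⟩ := hGb.2 j hj0
  have hSj : ∀ s ∈ S, s ≤ j := fun s hs => hj.1 hs
  -- hard inclusion
  have hMS : maxBelow G j ⊆ S := by
    intro hv hhv
    set h : maxBelow G j := ⟨hv, hhv⟩ with hh
    have hhG : (h : L) ∈ G := h.2.1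
    set Sh : Set L := {s ∈ S | s ≤ (h : L)} with hSh
    -- step 1
    have step1 : ∀ z : L, z ≤ (h : L) → (∀ s ∈ Sh, s ≤ z) → z = (h : L) := by
      intro z hzh hub
      have hzj : z ≤ j := le_trans hzh h.2.2.1
      set U : (k : maxBelow G j) → Set.Iic (k : L) :=
        fun k => if hk : k = h then (hk ▸ (φ.symm ⟨z, hzj⟩ k)) else ⟨(k : L), le_refl _⟩
        with hU
      have hub2 : ∀ s ∈ S, s ≤ ((φ U : Set.Iic j) : L) := by
        intro s hs
        have hsj : s ≤ j := hSj s hs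
        have hle : φ.symm ⟨s, hsj⟩ ≤ U := by
          intro k
          by_cases hk : k = h
          · subst hk
            rw [hU]
            simp only [dif_pos]
            by_cases hsh : s ≤ (h : L)
            · exact (φ.symm.monotone (show (⟨s,hsj⟩ : Set.Iic j) ≤ ⟨z, hzj⟩ from
                hub s ⟨hs, hsh⟩)) h
            · obtain ⟨g, hg⟩ := exists_factor (hNn.1 (hSN hs)) hsj
              have hgk : h ≠ g := fun e => hsh (by rw [e]; exact hg)
              rw [symm_coord_bot φ hφ g s hsj hg h hgk]
              exact bot_le
          · rw [hU]
            simp only [dif_neg hk]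
            exact (φ.symm ⟨s, hsj⟩ k).2
        have := φ.monotone hle
        rw [φ.apply_symm_apply] at this
        exact this
      have hjU : j ≤ ((φ U : Set.Iic j) : L) := hj.2 hub2
      have hUj : φ U = ⟨j, le_refl j⟩ := Subtype.ext (le_antisymm (φ U).2 hjU)
      have hUtop : U = (fun k => ⟨(k : L), le_refl _⟩) := by
        apply φ.injective
        rw [hUj, phi_top φ hφ]
      have hcoord := congrFun hUtop h
      rw [hU] at hcoord
      simp only [dif_pos] at hcoord
      exact coord_eq_top φ hφ hzj h hzh (congrArg Subtype.val hcoord)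
    -- Sh nonempty
    have hShne : Sh.Nonempty := by
      by_contra hemp
      have hemp' : Sh = ∅ := Set.not_nonempty_iff_eq_empty.1 hemp
      have := step1 ⊥ bot_le (fun s hs => by rw [hemp'] at hs; exact absurd hs (Set.notMem_empty s))
      exact hGb.1 _ hhG this.symm
    -- IsLUB Sh h
    have hlub : IsLUB Sh (h : L) := by
      constructor
      · exact fun s hs => hs.2
      · intro z hz
        have h1 : z ⊓ (h : L) = (h : L) :=
          step1 (z ⊓ h) inf_le_right (fun s hs => le_inf (hz hs) hs.2)
        calc (h : L) = z ⊓ h := h1.symm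
          _ ≤ z := inf_le_left
    obtain ⟨s, hsSh⟩ := hShne
    by_cases hex : ∃ s' ∈ Sh, s' ≠ s
    · obtain ⟨s', hs'Sh, hne⟩ := hex
      exfalso
      set T : Finset L := Sh.toFinset with hT
      have hTS : (↑T : Set L) = Sh := Set.coe_toFinset _
      have hcard : 2 ≤ T.card := by
        rw [show (2:ℕ) = 1 + 1 from rfl]
        exact Finset.one_lt_card.2 ⟨s', by simp [hT, Set.mem_toFinset, hs'Sh],
          s, by simp [hT, Set.mem_toFinset, hsSh], hne⟩
      obtain ⟨j', hj', hj'G⟩ := hNn.2 T (hTS ▸ fun a ha => hSN ha.1) hcard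
        (by
          intro a ha b hb hab hle
          rw [hT, Set.mem_toFinset] at ha hb
          exact hab (hanti a ha.1 b hb.1 hle))
      rw [hTS] at hj'
      exact hj'G (hj'.unique hlub ▸ hhG)
    · push_neg at hex
      have heq : s = (h : L) := step1 s hsSh.2 (fun s' hs' => (hex s' hs').le)
      show (h : L) ∈ S
      exact heq ▸ hsSh.1
  -- easy inclusion
  have hSM : S ⊆ maxBelow G j := by
    intro s hs
    have hsG : s ∈ G := hNn.1 (hSN hs)
    obtain ⟨g, hg⟩ := exists_factor hsG (hSj s hs)
    have hgS : (g : L) ∈ S := hMS g.2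
    have : s = (g : L) := hanti s hs g hgS hg
    exact this ▸ g.2
  exact le_antisymm hMS hSM

lemma forward_aux (hGb : IsBuilding G) : ∀ n : ℕ, ∀ N : Set L, N.ncard ≤ n →
    IsNested G N →
    ∃ C : Set L, IsChain (· ≤ ·) C ∧ N = ⋃ x ∈ C, maxBelow G x ∧
      ∀ x ∈ C, ∀ u : L, (∀ m ∈ N, m ≤ u) → x ≤ u := by
  classical
  intro n
  induction n with
  | zero =>
    intro N hcard _
    have hNe : N = ∅ := (Set.ncard_eq_zero (Set.toFinite N)).1 (Nat.le_zero.1 hcard)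
    exact ⟨∅, by simp [IsChain, Set.Pairwise], by simp [hNe], by simp⟩
  | succ n ih =>
    intro N hcard hNn
    rcases N.eq_empty_or_nonempty with hNe | hNe
    · exact ⟨∅, by simp [IsChain, Set.Pairwise], by simp [hNe], by simp⟩
    set S : Set L := {s ∈ N | ∀ m ∈ N, s ≤ m → m = s} with hS
    have hSN : S ⊆ N := fun s hs => hs.1
    have hmaxab : ∀ m ∈ N, ∃ s ∈ S, m ≤ s := by
      intro m hm
      obtain ⟨s, hsN, hms, hsmax⟩ := exists_maximal_above hm
      exact ⟨s, ⟨hsN, hsmax⟩, hms⟩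
    have hSne : S.Nonempty := by
      obtain ⟨m, hm⟩ := hNe
      obtain ⟨s, hsS, -⟩ := hmaxab m hm
      exact ⟨s, hsS⟩
    have hanti : ∀ a ∈ S, ∀ b ∈ S, a ≤ b → a = b := by
      intro a ha b hb hab
      exact (ha.2 b hb.1 hab).symm
    obtain ⟨s₀, hs₀⟩ := hSne
    -- get the least upper bound of S
    have hjex : ∃ j : L, IsLUB S j := by
      by_cases hex : ∃ s' ∈ S, s' ≠ s₀
      · obtain ⟨s', hs', hne⟩ := hex
        set T : Finset L := S.toFinset with hT
        have hTS : (↑T : Set L) = S := Set.coe_toFinset _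
        have hcard2 : 2 ≤ T.card :=
          Finset.one_lt_card.2 ⟨s', by simp [hT, hs'], s₀, by simp [hT, hs₀], hne⟩
        obtain ⟨j, hj, -⟩ := hNn.2 T (hTS ▸ hSN) hcard2
          (fun a ha b hb hab hle => hab (hanti a (Set.mem_toFinset.1 ha)
            b (Set.mem_toFinset.1 hb) hle))
        exact ⟨j, hTS ▸ hj⟩
      · push_neg at hex
        refine ⟨s₀, ⟨fun s hs => (hex s hs).le, fun z hz => hz hs₀⟩⟩
    obtain ⟨j, hjS⟩ := hjex
    have hfac : maxBelow G j = S := maxBelow_of_lub hGb hNn hSN hanti ⟨s₀, hs₀⟩ hjS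
    set N' : Set L := N \ S with hN'
    have hN'n : IsNested G N' := by
      refine ⟨fun m hm => hNn.1 hm.1, fun T hT h2 hinc => hNn.2 T (fun t ht => (hT ht).1) h2 hinc⟩
    have hN'card : N'.ncard ≤ n := by
      have hss : N' ⊂ N := ⟨Set.diff_subset, fun hsub => (hsub (hSN hs₀)).2 hs₀⟩
      have := Set.ncard_lt_ncard hss (Set.toFinite N)
      omega
    obtain ⟨C', hC'chain, hC'eq, hC'bd⟩ := ih N' hN'card hN'n
    have hjUB : ∀ m ∈ N, m ≤ j := by
      intro m hm
      obtain ⟨s, hsS, hms⟩ := hmaxab m hm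
      exact le_trans hms (hjS.1 hsS)
    have hC'le : ∀ x ∈ C', x ≤ j :=
      fun x hx => hC'bd x hx j (fun m hm => hjUB m hm.1)
    refine ⟨insert j C', ?_, ?_, ?_⟩
    · exact hC'chain.insert (fun b hb _ => Or.inr (hC'le b hb))
    · rw [Set.biUnion_insert, hfac, ← hC'eq, hN', Set.union_diff_cancel hSN]
    · intro x hx u hu
      rcases hx with hx | hx
      · exact hx ▸ hjS.2 (fun s hs => hu s (hSN hs))
      · exact hC'bd x hx u (fun m hm => hu m hm.1)

lemma backward_aux (hGb : IsBuilding G) : ∀ n : ℕ, ∀ C : Set L, C.ncard ≤ n →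
    IsChain (· ≤ ·) C →
    ∀ T : Finset L, ↑T ⊆ (⋃ x ∈ C, maxBelow G x) → 2 ≤ T.card →
    (∀ a ∈ T, ∀ b ∈ T, a ≠ b → ¬ a ≤ b) →
    ∃ j : L, IsLUB (↑T : Set L) j ∧ j ∉ G := by
  classical
  intro n
  induction n with
  | zero =>
    intro C hcard hC T hTN hTcard hinc
    have hCe : C = ∅ := (Set.ncard_eq_zero (Set.toFinite C)).1 (Nat.le_zero.1 hcard)
    obtain ⟨t₀, ht₀⟩ := Finset.card_pos.1 (by omega : 0 < T.card)
    exact absurd (hTN ht₀) (by simp [hCe])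
  | succ n ih =>
    intro C hcard hC T hTN hTcard hinc
    obtain ⟨t₀, ht₀⟩ := Finset.card_pos.1 (by omega : 0 < T.card)
    obtain ⟨x₁, hx₁C, -⟩ := Set.mem_iUnion₂.1 (hTN ht₀)
    obtain ⟨x₀, hx₀C, hx₀max⟩ := chain_has_greatest hC ⟨x₁, hx₁C⟩
    have hTfacts : ∀ t ∈ T, t ∈ G ∧ t ≤ x₀ := by
      intro t ht
      obtain ⟨x, hxC, htx⟩ := Set.mem_iUnion₂.1 (hTN ht)
      exact ⟨htx.1, le_trans htx.2.1 (hx₀max x hxC)⟩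
    have ht₀G := (hTfacts t₀ ht₀).1
    have ht₀bot : t₀ ≠ ⊥ := hGb.1 t₀ ht₀G
    have hx₀bot : x₀ ≠ ⊥ := fun e => ht₀bot (le_antisymm (e ▸ (hTfacts t₀ ht₀).2) bot_le)
    obtain ⟨φ, hφ⟩ := hGb.2 x₀ hx₀bot
    set C' : Set L := C \ {x₀} with hC'
    have hC'chain : IsChain (· ≤ ·) C' := hC.mono Set.diff_subset
    have hC'card : C'.ncard ≤ n := by
      have hss : C' ⊂ C := ⟨Set.diff_subset, fun hsub => ((hsub hx₀C).2 rfl)⟩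
      have := Set.ncard_lt_ncard hss (Set.toFinite C)
      omega
    set Th : maxBelow G x₀ → Finset L := fun h => T.filter (fun t => t ≤ (h : L)) with hTh
    have hThsub : ∀ h, ∀ t ∈ Th h, t ∈ T ∧ t ≤ (h : L) := by
      intro h t ht
      exact Finset.mem_filter.1 ht
    -- existence of local joins
    have H : ∀ h : maxBelow G x₀, ∃ jh : L, jh ≤ (h : L) ∧ (∀ t ∈ Th h, t ≤ jh) ∧
        (∀ z : L, (∀ t ∈ Th h, t ≤ z) → jh ≤ z) ∧ ((Th h).Nonempty → jh ≠ ⊥) ∧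
        (2 ≤ (Th h).card → jh ∉ G) := by
      intro h
      rcases (Th h).eq_empty_or_nonempty with he | hne
      · exact ⟨⊥, bot_le, by simp [he], fun z _ => bot_le,
          fun hn => absurd he (Finset.nonempty_iff_ne_empty.1 hn), by simp [he]⟩
      by_cases h2 : 2 ≤ (Th h).card
      · -- at least two elements : use the inductive hypothesis
        have hhT : (h : L) ∉ T := by
          intro hhT
          obtain ⟨t, ht, t', ht', htt'⟩ := Finset.one_lt_card.1 h2
          have hex : ∃ t ∈ Th h, t ≠ (h : L) := by
            by_cases het : t = (h : L)
            · exact ⟨t', ht', fun e => htt' (by rw [het, e])⟩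
            · exact ⟨t, ht, het⟩
          obtain ⟨s, hsmem, hsne⟩ := hex
          exact hinc s (hThsub h s hsmem).1 (h : L) hhT hsne (hThsub h s hsmem).2
        have hThN' : (↑(Th h) : Set L) ⊆ ⋃ x ∈ C', maxBelow G x := by
          intro t ht
          rw [Finset.mem_coe] at ht
          obtain ⟨x, hxC, htx⟩ := Set.mem_iUnion₂.1 (hTN (hThsub h t ht).1)
          have hxx₀ : x ≠ x₀ := by
            intro e
            subst e
            have heq := htx.2.2 (h : L) h.2.1 h.2.2.1 (hThsub h t ht).2
            exact hhT (heq ▸ (hThsub h t ht).1)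
          exact Set.mem_iUnion₂.2 ⟨x, ⟨hxC, fun e => hxx₀ e⟩, htx⟩
        obtain ⟨jh, hjh, hjhG⟩ := ih C' hC'card hC'chain (Th h) hThN' h2
          (fun a ha b hb hab hle => hinc a (hThsub _ _ ha).1 b (hThsub _ _ hb).1 hab hle)
        refine ⟨jh, hjh.2 (fun t ht => (hThsub h t ht).2), fun t ht => hjh.1 ht,
          fun z hz => hjh.2 (fun t ht => hz t ht), fun _ hbot => ?_, fun _ => hjhG⟩
        obtain ⟨t, ht⟩ := hne
        exact hGb.1 t (hTfacts t (hThsub h t ht).1).1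
          (le_antisymm (hbot ▸ hjh.1 (Finset.mem_coe.2 ht)) bot_le)
      · -- exactly one element
        obtain ⟨t, ht⟩ := hne
        have hone : ∀ t' ∈ Th h, t' = t := by
          intro t' ht'
          by_contra hne'
          exact h2 (Finset.one_lt_card.2 ⟨t', ht', t, ht, hne'⟩)
        exact ⟨t, (hThsub h t ht).2, fun t' ht' => (hone t' ht').le, fun z hz => hz t ht,
          fun _ => hGb.1 t (hTfacts t (hThsub h t ht).1).1, fun h2' => absurd h2' h2⟩
    choose jh hjh1 hjh2 hjh3 hjh4 hjh5 using H
    have hjhx₀ : ∀ h, jh h ≤ x₀ := fun h => le_trans (hjh1 h) h.2.2.1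
    set U : (k : maxBelow G x₀) → Set.Iic (k : L) :=
      fun k => (φ.symm ⟨jh k, hjhx₀ k⟩) k with hU
    set j : L := ((φ U : Set.Iic x₀) : L) with hj
    have hfacEx : ∀ t ∈ T, ∃ g : maxBelow G x₀, t ≤ (g : L) :=
      fun t ht => exists_factor (hTfacts t ht).1 (hTfacts t ht).2
    have hUB : ∀ t ∈ T, t ≤ j := by
      intro t ht
      have htx₀ := (hTfacts t ht).2
      have hle : φ.symm ⟨t, htx₀⟩ ≤ U := by
        intro k
        by_cases htk : t ≤ (k : L)
        · have htjk : t ≤ jh k := hjh2 k t (Finset.mem_filter.2 ⟨ht, htk⟩)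
          exact (φ.symm.monotone
            (show (⟨t, htx₀⟩ : Set.Iic x₀) ≤ ⟨jh k, hjhx₀ k⟩ from htjk)) k
        · obtain ⟨g, hg⟩ := hfacEx t ht
          have hgk : k ≠ g := fun e => htk (by rw [e]; exact hg)
          show (φ.symm ⟨t, htx₀⟩) k ≤ (φ.symm ⟨jh k, hjhx₀ k⟩) k
          rw [symm_coord_bot φ hφ g t htx₀ hg k hgk]
          exact bot_le
      have h2 := φ.monotone hle
      rw [φ.apply_symm_apply] at h2
      exact h2
    have hLeast : ∀ z ∈ upperBounds (↑T : Set L), j ≤ z := by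
      intro z hz
      have hz' : z ⊓ x₀ ≤ x₀ := inf_le_right
      have hUV : U ≤ φ.symm ⟨z ⊓ x₀, hz'⟩ := by
        intro k
        have hjk : jh k ≤ z ⊓ x₀ := hjh3 k (z ⊓ x₀)
          (fun t ht => le_inf (hz (Finset.mem_coe.2 (hThsub k t ht).1))
            ((hTfacts t (hThsub k t ht).1).2))
        exact (φ.symm.monotone
          (show (⟨jh k, hjhx₀ k⟩ : Set.Iic x₀) ≤ ⟨z ⊓ x₀, hz'⟩ from hjk)) k
      have h2 := φ.monotone hUV
      rw [φ.apply_symm_apply] at h2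
      exact le_trans h2 inf_le_left
    refine ⟨j, ⟨fun t ht => hUB t ht, fun z hz => hLeast z hz⟩, ?_⟩
    intro hjG
    have hjbot : j ≠ ⊥ := fun e => ht₀bot (le_antisymm (e ▸ hUB t₀ ht₀) bot_le)
    have hjx₀ : j ≤ x₀ := (φ U).2
    obtain ⟨hstar, hjhstar⟩ := exists_factor hjG hjx₀
    have hUeq : U = φ.symm ⟨j, hjx₀⟩ := by
      have heq : (⟨j, hjx₀⟩ : Set.Iic x₀) = φ U := Subtype.ext rfl
      rw [heq, φ.symm_apply_apply]
    have hcoordbot : ∀ k, k ≠ hstar → U k = ⟨⊥, bot_le⟩ := by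
      intro k hk
      rw [hUeq]
      exact symm_coord_bot φ hφ hstar j hjx₀ hjhstar k hk
    have hThempty : ∀ k, k ≠ hstar → Th k = ∅ := by
      intro k hk
      rcases (Th k).eq_empty_or_nonempty with he | hne
      · exact he
      exfalso
      have hjkbot : jh k = ⊥ := by
        apply eq_bot_of_coords_bot φ hφ (hjhx₀ k)
        intro k'
        by_cases hk' : k' = k
        · subst hk'
          have := hcoordbot k' hk
          rw [hU] at this
          simpa using this
        · exact symm_coord_bot φ hφ k (jh k) (hjhx₀ k) (hjh1 k) k' hk'
      exact (hjh4 k hne) hjkbot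
    have hTsub : T ⊆ Th hstar := by
      intro t ht
      obtain ⟨g, hg⟩ := hfacEx t ht
      have hgstar : g = hstar := by
        by_contra hne
        have hmem : t ∈ Th g := Finset.mem_filter.2 ⟨ht, hg⟩
        rw [hThempty g hne] at hmem
        exact absurd hmem (Finset.notMem_empty t)
      exact Finset.mem_filter.2 ⟨ht, hgstar ▸ hg⟩
    have hcard2 : 2 ≤ (Th hstar).card := le_trans hTcard (Finset.card_le_card hTsub)
    have hjG' : jh hstar ∉ G := hjh5 hstar hcard2
    have hUeq2 : U = φ.symm ⟨jh hstar, hjhx₀ hstar⟩ := by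
      funext k
      by_cases hk : k = hstar
      · subst hk
        rw [hU]
      · rw [hcoordbot k hk,
          symm_coord_bot φ hφ hstar (jh hstar) (hjhx₀ hstar) (hjh1 hstar) k hk]
    have hjeq : j = jh hstar := by
      rw [hj, hUeq2, φ.apply_symm_apply]
    exact hjG' (hjeq ▸ hjG)

end Forward

/-- `N ⊆ G` is nested iff it is the union of the sets of factors of the
elements of some chain in `L`. -/
theorem isNested_iff_union_of_factors_of_chain {L : Type u} [SemilatticeInf L] [Fintype L]
    [OrderBot L] (G : Set L) (hG : IsBuilding G) (N : Set L) (hN : N ⊆ G) :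
    IsNested G N ↔
      ∃ C : Set L, IsChain (· ≤ ·) C ∧ N = ⋃ x ∈ C, maxBelow G x := by
  constructor
  · intro hNn
    obtain ⟨C, hC, hEq, -⟩ := forward_aux hG N.ncard N le_rfl hNn
    exact ⟨C, hC, hEq⟩
  · rintro ⟨C, hC, hEq⟩
    refine ⟨hN, fun T hT h2 hinc => ?_⟩
    exact backward_aux hG C.ncard C le_rfl hC T (hEq ▸ hT) h2 hinc
end
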